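/- The sinhlog and coshlog endomorphisms are orthogonal: for every real inner product space and every family of vectors (V_w), and at every grade n, ⟨½(id−S), ½(id+S)⟩ = 0, where the inner product is taken over the words of length n. -/

import Mathlib

open Finsupp

/-- Words over the alphabet `A = {0,1,…,d}`. -/
abbrev Word (d : ℕ) : Type := List (Fin (d+1))

/-- The free real vector space with basis the set of all words. -/
abbrev KA (d : ℕ) : Type := Word d →₀ ℝ

/-- Shuffle product of two words, as an element of `KA d`. -/
noncomputable def shuffleWord (d : ℕ) : Word d → Word d → KA d
  | [], v => Finsupp.single v 1
  | a :: u, [] => Finsupp.single (a :: u) 1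
  | a :: u, b :: v =>
      Finsupp.mapDomain (List.cons a) (shuffleWord d u (b :: v)) +
      Finsupp.mapDomain (List.cons b) (shuffleWord d (a :: u) v)
  termination_by u v => u.length + v.length

/-- Bilinear extension of the shuffle product to `KA d`. -/
noncomputable def sh (d : ℕ) (x y : KA d) : KA d :=
  x.sum fun u cu => y.sum fun v cv => (cu * cv) • shuffleWord d u v

/-- Admissible words: concatenations of blocks each of which is the single
letter `0` or a pair `aa` with `a ≠ 0`. -/
inductive Admissible (d : ℕ) : Word d → Prop
  | nil : Admissible d []
  | zero {w : Word d} : Admissible d w → Admissible d (0 :: w)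
  | pair {w : Word d} (a : Fin (d+1)) : a ≠ 0 → Admissible d w →
      Admissible d (a :: a :: w)

/-- Number of `0` letters. -/
def zc (d : ℕ) (w : Word d) : ℕ := w.count 0

/-- Half the number of nonzero letters. -/
def dc (d : ℕ) (w : Word d) : ℕ := (w.length - w.count 0) / 2

def nc (d : ℕ) (w : Word d) : ℕ := zc d w + dc d w

open Classical in
/-- The expectation map on words. -/
noncomputable def Ebar (d : ℕ) (t : ℝ) (w : Word d) : ℝ :=
  if Admissible d w then t ^ nc d w / (2 ^ dc d w * Nat.factorial (nc d w)) else 0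

/-- Linear extension of the expectation map to `KA d`. -/
noncomputable def EbarL (d : ℕ) (t : ℝ) (x : KA d) : ℝ :=
  x.sum fun w c => c * Ebar d t w

/-- The linear endomorphism of `KA d` determined by values on basis words. -/
noncomputable def wordLift (d : ℕ) (f : Word d → KA d) : KA d →ₗ[ℝ] KA d :=
  Finsupp.lsum ℝ fun w => LinearMap.toSpanSingleton ℝ (KA d) (f w)

/-- The identity endomorphism `id`. -/
noncomputable def idE (d : ℕ) : KA d →ₗ[ℝ] KA d := LinearMap.id

/-- The reversal endomorphism `|S|`. -/
noncomputable def revE (d : ℕ) : KA d →ₗ[ℝ] KA d :=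
  wordLift d fun w => Finsupp.single w.reverse 1

/-- The antipode `S`. -/
noncomputable def Sa (d : ℕ) : KA d →ₗ[ℝ] KA d :=
  wordLift d fun w => Finsupp.single w.reverse ((-1 : ℝ) ^ w.length)

/-- The convolution unit `ν`. -/
noncomputable def nuE (d : ℕ) : KA d →ₗ[ℝ] KA d :=
  wordLift d fun w => if w = [] then Finsupp.single ([] : Word d) 1 else 0

/-- The expectation endomorphism `E`. -/
noncomputable def EE (d : ℕ) (t : ℝ) : KA d →ₗ[ℝ] KA d :=
  wordLift d fun w => Finsupp.single ([] : Word d) (Ebar d t w)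

/-- The convolution product `X ⋆ Y`. -/
noncomputable def conv (d : ℕ) (X Y : KA d →ₗ[ℝ] KA d) : KA d →ₗ[ℝ] KA d :=
  wordLift d fun w => ∑ k ∈ Finset.range (w.length + 1),
    sh d (X (Finsupp.single (w.take k) 1)) (Y (Finsupp.single (w.drop k) 1))

/-- Convolution powers, `X^{⋆0} = ν`. -/
noncomputable def convPow (d : ℕ) (X : KA d →ₗ[ℝ] KA d) : ℕ → (KA d →ₗ[ℝ] KA d)
  | 0 => nuE d
  | k + 1 => conv d X (convPow d X k)

/-- The inner product `⟨X,Y⟩` of endomorphisms, taken over the words of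
length `n`, relative to the family of vectors `Vf`. -/
noncomputable def ip (d : ℕ) (t : ℝ) {H : Type*} [NormedAddCommGroup H]
    [InnerProductSpace ℝ H] (Vf : Word d → H) (n : ℕ)
    (X Y : KA d →ₗ[ℝ] KA d) : ℝ :=
  ∑ u : Fin n → Fin (d+1), ∑ v : Fin n → Fin (d+1),
    EbarL d t (sh d (X (Finsupp.single (List.ofFn u) 1))
                    (Y (Finsupp.single (List.ofFn v) 1))) *
      (inner ℝ (Vf (List.ofFn u)) (Vf (List.ofFn v)) : ℝ)

/-- Positive semidefiniteness of the expectation Gram matrix at grade `n`: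
indexed by the words of length `n` together with the empty word. -/
def gramPSD (d n : ℕ) (t : ℝ) : Prop :=
  ∀ c : Option (Fin n → Fin (d+1)) → ℝ,
    0 ≤ ∑ x : Option (Fin n → Fin (d+1)), ∑ y : Option (Fin n → Fin (d+1)),
      c x * c y *
        EbarL d t (shuffleWord d (x.elim ([] : Word d) List.ofFn)
                                 (y.elim ([] : Word d) List.ofFn))

lemma shuffle_nil_left (d : ℕ) (v : Word d) : shuffleWord d [] v = Finsupp.single v 1 := by
  rw [shuffleWord]

lemma shuffle_nil_right (d : ℕ) (u : Word d) : shuffleWord d u [] = Finsupp.single u 1 := by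
  cases u <;> rw [shuffleWord]

lemma shuffle_cons (d : ℕ) (a b : Fin (d+1)) (u v : Word d) :
    shuffleWord d (a :: u) (b :: v) =
      Finsupp.mapDomain (List.cons a) (shuffleWord d u (b :: v)) +
      Finsupp.mapDomain (List.cons b) (shuffleWord d (a :: u) v) := by
  rw [shuffleWord]

lemma shuffle_concat_aux (d : ℕ) (a b : Fin (d+1)) :
    ∀ (n : ℕ) (u v : Word d), u.length + v.length ≤ n →
    shuffleWord d (u ++ [a]) (v ++ [b]) =
      Finsupp.mapDomain (· ++ [a]) (shuffleWord d u (v ++ [b])) +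
      Finsupp.mapDomain (· ++ [b]) (shuffleWord d (u ++ [a]) v) := by
  intro n
  induction n with
  | zero =>
    intro u v h
    obtain ⟨hu, hv⟩ : u = [] ∧ v = [] := by
      constructor <;> [skip; skip] <;>
        (first | exact List.eq_nil_of_length_eq_zero (by omega))
    subst hu; subst hv
    simp only [List.nil_append, shuffle_cons, shuffle_nil_left, shuffle_nil_right,
      Finsupp.mapDomain_single, List.singleton_append]
    abel
  | succ n ih =>
    intro u v h
    match u, v with
    | [], [] =>
      simp only [List.nil_append, shuffle_cons, shuffle_nil_left, shuffle_nil_right,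
        Finsupp.mapDomain_single, List.singleton_append]
      abel
    | [], c :: v' =>
      have hv' : ([] : Word d).length + v'.length ≤ n := by simp at h ⊢; omega
      simp only [List.nil_append, List.cons_append] at *
      rw [shuffle_cons, shuffle_nil_left, shuffle_cons, shuffle_nil_left]
      have := ih [] v' hv'
      simp only [List.nil_append] at this
      rw [this, shuffle_nil_left]
      simp only [Finsupp.mapDomain_add, Finsupp.mapDomain_single,
        ← Finsupp.mapDomain_comp, Function.comp_def, List.cons_append]
      abel
    | c :: u', [] =>
      have hu' : u'.length + ([] : Word d).length ≤ n := by simp at h ⊢; omega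
      simp only [List.nil_append, List.cons_append] at *
      rw [shuffle_cons, shuffle_nil_right, shuffle_cons, shuffle_nil_right]
      have := ih u' [] hu'
      simp only [List.nil_append] at this
      rw [this, shuffle_nil_right]
      simp only [Finsupp.mapDomain_add, Finsupp.mapDomain_single,
        ← Finsupp.mapDomain_comp, Function.comp_def, List.cons_append]
      abel
    | x :: u', y :: v' =>
      have h1 : u'.length + (y :: v').length ≤ n := by simp at h ⊢; omega
      have h2 : (x :: u').length + v'.length ≤ n := by simp at h ⊢; omega
      simp only [List.cons_append]
      rw [shuffle_cons]
      have e1 := ih u' (y :: v') h1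
      have e2 := ih (x :: u') v' h2
      simp only [List.cons_append] at e1 e2
      rw [e1, e2]
      conv_rhs => rw [shuffle_cons, shuffle_cons]
      simp only [Finsupp.mapDomain_add,
        ← Finsupp.mapDomain_comp, Function.comp_def, List.cons_append]
      abel

lemma shuffle_concat (d : ℕ) (a b : Fin (d+1)) (u v : Word d) :
    shuffleWord d (u ++ [a]) (v ++ [b]) =
      Finsupp.mapDomain (· ++ [a]) (shuffleWord d u (v ++ [b])) +
      Finsupp.mapDomain (· ++ [b]) (shuffleWord d (u ++ [a]) v) :=
  shuffle_concat_aux d a b (u.length + v.length) u v le_rfl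

lemma shuffle_reverse_aux (d : ℕ) :
    ∀ (n : ℕ) (u v : Word d), u.length + v.length ≤ n →
    shuffleWord d u.reverse v.reverse =
      Finsupp.mapDomain List.reverse (shuffleWord d u v) := by
  intro n
  induction n with
  | zero =>
    intro u v h
    obtain ⟨hu, hv⟩ : u = [] ∧ v = [] := by
      constructor <;> exact List.eq_nil_of_length_eq_zero (by omega)
    subst hu; subst hv
    simp [shuffle_nil_left]
  | succ n ih =>
    intro u v h
    match u, v with
    | [], v => simp [shuffle_nil_left]
    | a :: u', [] => simp [shuffle_nil_right]
    | a :: u', b :: v' =>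
      have h1 : u'.length + (b :: v').length ≤ n := by simp at h ⊢; omega
      have h2 : (a :: u').length + v'.length ≤ n := by simp at h ⊢; omega
      rw [List.reverse_cons, List.reverse_cons, shuffle_concat]
      rw [← List.reverse_cons (a := b) (as := v'), ← List.reverse_cons (a := a) (as := u')]
      rw [ih u' (b :: v') h1, ih (a :: u') v' h2]
      rw [shuffle_cons]
      simp only [Finsupp.mapDomain_add, ← Finsupp.mapDomain_comp, Function.comp_def,
        List.reverse_cons]

lemma shuffle_reverse (d : ℕ) (u v : Word d) :
    shuffleWord d u.reverse v.reverse =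
      Finsupp.mapDomain List.reverse (shuffleWord d u v) :=
  shuffle_reverse_aux d (u.length + v.length) u v le_rfl

lemma adm_append_zero {d : ℕ} {w : Word d} (h : Admissible d w) :
    Admissible d (w ++ [0]) := by
  induction h with
  | nil => exact .zero .nil
  | zero _ ih => exact .zero ih
  | pair a ha _ ih => exact .pair a ha ih

lemma adm_append_pair {d : ℕ} {w : Word d} (a : Fin (d+1)) (ha : a ≠ 0)
    (h : Admissible d w) : Admissible d (w ++ [a, a]) := by
  induction h with
  | nil => exact .pair a ha .nil
  | zero _ ih => exact .zero ih
  | pair b hb _ ih => exact .pair b hb ih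

lemma adm_reverse {d : ℕ} {w : Word d} (h : Admissible d w) :
    Admissible d w.reverse := by
  induction h with
  | nil => exact .nil
  | zero _ ih => rw [List.reverse_cons]; exact adm_append_zero ih
  | pair a ha _ ih =>
      rw [List.reverse_cons, List.reverse_cons, List.append_assoc]
      exact adm_append_pair a ha ih

lemma adm_reverse_iff {d : ℕ} (w : Word d) :
    Admissible d w.reverse ↔ Admissible d w :=
  ⟨fun h => by simpa using adm_reverse h, adm_reverse⟩

lemma Ebar_reverse (d : ℕ) (t : ℝ) (w : Word d) :
    Ebar d t w.reverse = Ebar d t w := by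
  simp only [Ebar, nc, zc, dc, List.count_reverse, List.length_reverse]
  rw [adm_reverse_iff]

lemma EbarL_mapDomain_reverse (d : ℕ) (t : ℝ) (x : KA d) :
    EbarL d t (Finsupp.mapDomain List.reverse x) = EbarL d t x := by
  unfold EbarL
  rw [Finsupp.sum_mapDomain_index (h := fun w c => c * Ebar d t w) (fun w => zero_mul _)
    (fun w b₁ b₂ => add_mul b₁ b₂ _)]
  simp [Ebar_reverse]

lemma EbarL_single (d : ℕ) (t : ℝ) (w : Word d) (c : ℝ) :
    EbarL d t (Finsupp.single w c) = c * Ebar d t w := by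
  unfold EbarL
  rw [Finsupp.sum_single_index (h := fun w c => c * Ebar d t w) (zero_mul _)]

lemma EbarL_add (d : ℕ) (t : ℝ) (x y : KA d) :
    EbarL d t (x + y) = EbarL d t x + EbarL d t y := by
  unfold EbarL
  exact Finsupp.sum_add_index' (fun w => zero_mul _) (fun w b₁ b₂ => add_mul b₁ b₂ _)

lemma EbarL_smul (d : ℕ) (t : ℝ) (c : ℝ) (x : KA d) :
    EbarL d t (c • x) = c * EbarL d t x := by
  unfold EbarL
  rw [Finsupp.sum_smul_index (h := fun w c => c * Ebar d t w) (fun w => zero_mul _), Finsupp.mul_sum]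
  simp [mul_assoc]

lemma phi_reverse (d : ℕ) (t : ℝ) (u v : Word d) :
    EbarL d t (shuffleWord d u.reverse v.reverse) = EbarL d t (shuffleWord d u v) := by
  rw [shuffle_reverse, EbarL_mapDomain_reverse]

lemma phi_swap_reverse (d : ℕ) (t : ℝ) (u v : Word d) :
    EbarL d t (shuffleWord d u.reverse v) = EbarL d t (shuffleWord d u v.reverse) := by
  conv_rhs => rw [← List.reverse_reverse u]
  rw [phi_reverse]

lemma sh_single_single (d : ℕ) (u v : Word d) (a b : ℝ) :
    sh d (Finsupp.single u a) (Finsupp.single v b) = (a * b) • shuffleWord d u v := by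
  unfold sh
  rw [Finsupp.sum_single_index
    (h := fun u' cu => (Finsupp.single v b).sum fun v' cv => (cu * cv) • shuffleWord d u' v')]
  · rw [Finsupp.sum_single_index (h := fun v' cv => (a * cv) • shuffleWord d u v')]
    simp
  · simp

lemma sh_add_left (d : ℕ) (x x' y : KA d) :
    sh d (x + x') y = sh d x y + sh d x' y := by
  unfold sh
  rw [Finsupp.sum_add_index'
    (h := fun u cu => y.sum fun v cv => (cu * cv) • shuffleWord d u v)]
  · simp
  · intro u b₁ b₂
    rw [← Finsupp.sum_add]
    simp [add_mul, add_smul]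

lemma sh_add_right (d : ℕ) (x y y' : KA d) :
    sh d x (y + y') = sh d x y + sh d x y' := by
  unfold sh
  rw [← Finsupp.sum_add]
  congr 1
  ext u cu
  rw [Finsupp.sum_add_index' (h := fun v cv => (cu * cv) • shuffleWord d u v)]
  · simp
  · intro v b₁ b₂; simp [mul_add, add_smul]

lemma Sa_single (d : ℕ) (u : Word d) :
    Sa d (Finsupp.single u 1) = Finsupp.single u.reverse ((-1 : ℝ) ^ u.length) := by
  unfold Sa wordLift
  rw [Finsupp.lsum_single]
  simp [LinearMap.toSpanSingleton_apply]

lemma X_single (d : ℕ) (u : Word d) :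
    ((1/2 : ℝ) • (idE d - Sa d)) (Finsupp.single u 1)
      = Finsupp.single u (1/2 : ℝ)
        + Finsupp.single u.reverse (-((-1:ℝ)^u.length)/2) := by
  rw [LinearMap.smul_apply, LinearMap.sub_apply, Sa_single]
  simp only [idE, LinearMap.id_apply, smul_sub, Finsupp.smul_single, smul_eq_mul]
  rw [sub_eq_add_neg, ← Finsupp.single_neg]
  ring_nf

lemma Y_single (d : ℕ) (v : Word d) :
    ((1/2 : ℝ) • (idE d + Sa d)) (Finsupp.single v 1)
      = Finsupp.single v (1/2 : ℝ)
        + Finsupp.single v.reverse (((-1:ℝ)^v.length)/2) := by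
  rw [LinearMap.smul_apply, LinearMap.add_apply, Sa_single]
  simp only [idE, LinearMap.id_apply, smul_add, Finsupp.smul_single, smul_eq_mul]
  ring_nf

lemma key (d : ℕ) (t : ℝ) (u v : Word d) (h : u.length = v.length) :
    EbarL d t (sh d (((1/2 : ℝ) • (idE d - Sa d)) (Finsupp.single u 1))
                    (((1/2 : ℝ) • (idE d + Sa d)) (Finsupp.single v 1))) = 0 := by
  rw [X_single, Y_single, sh_add_left, sh_add_right, sh_add_right,
    sh_single_single, sh_single_single, sh_single_single, sh_single_single,
    EbarL_add, EbarL_add, EbarL_add, EbarL_smul, EbarL_smul, EbarL_smul, EbarL_smul]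
  rw [h]
  rw [phi_reverse d t u v, phi_swap_reverse d t u v]
  have he : ((-1:ℝ)^v.length) * ((-1:ℝ)^v.length) = 1 := by
    rw [← pow_add]
    exact Even.neg_one_pow ⟨v.length, rfl⟩
  generalize hg : ((-1:ℝ) ^ v.length) = e at he ⊢
  linear_combination (-(EbarL d t (shuffleWord d u v)) / 4) * he

theorem stmt_11 (d n : ℕ) (hd : 1 ≤ d) (hn : 1 ≤ n) (t : ℝ) (ht : 0 < t)
    {H : Type*} [NormedAddCommGroup H] [InnerProductSpace ℝ H]
    (Vf : Word d → H) :
    ip d t Vf n ((1 / 2 : ℝ) • (idE d - Sa d)) ((1 / 2 : ℝ) • (idE d + Sa d)) = 0 := by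
  unfold ip
  apply Finset.sum_eq_zero
  intro u _
  apply Finset.sum_eq_zero
  intro v _
  rw [key d t (List.ofFn u) (List.ofFn v) (by simp), zero_mul]
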